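/- arXiv:1509.06829 — 4 statements merged into one kernel-verified Lean document; each statement's English description precedes it below -/
import Mathlib

section
/- Let C be the ℤ_4-linear code of length 3 generated by {(1,1,1),(0,0,2),(0,2,0)} over ℤ_4. Then C has exactly 16 codewords, is self-complementary (closed under adding (1,1,1)), and every pair of distinct codewords (with representatives in {0,1,2,3}^3 ⊂ ℤ^3) has asymmetric distance Δ ≥ 2. -/
def asymN {n : ℕ} (x y : Fin n → ℤ) : ℤ := ∑ i, max (y i - x i) 0

def asymDelta {n : ℕ} (x y : Fin n → ℤ) : ℤ := max (asymN x y) (asymN y x)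

/-- Integer lift of a `ZMod q` codeword. -/
def liftWord {q n : ℕ} (c : Fin n → ZMod q) : Fin n → ℤ := fun i => ((c i).val : ℤ)

def codePred (x : Fin 3 → ZMod 4) : Prop := 2 * x 0 = 2 * x 1 ∧ 2 * x 0 = 2 * x 2

instance : DecidablePred codePred := fun _ => instDecidableAnd

def S4 : Submodule (ZMod 4) (Fin 3 → ZMod 4) where
  carrier := {x | codePred x}
  add_mem' := by
    rintro a b ⟨h1, h2⟩ ⟨h3, h4⟩
    refine ⟨?_, ?_⟩
    · simp only [Pi.add_apply, mul_add, h1, h3]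
    · simp only [Pi.add_apply, mul_add, h2, h4]
  zero_mem' := by constructor <;> simp
  smul_mem' := by
    rintro c x ⟨h1, h2⟩
    refine ⟨?_, ?_⟩ <;>
      simp only [Pi.smul_apply, smul_eq_mul, mul_left_comm, ← h1, ← h2]

lemma two_mul_eq (u v : ZMod 4) (h : 2 * u = 2 * v) : v = u ∨ v = u + 2 := by
  revert h; revert u v; decide

lemma span_eq_pred :
    ((Submodule.span (ZMod 4)
      ({![1,1,1], ![0,0,2], ![0,2,0]} : Set (Fin 3 → ZMod 4))) : Set (Fin 3 → ZMod 4))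
      = {x | codePred x} := by
  apply le_antisymm
  · have : Submodule.span (ZMod 4)
        ({![1,1,1], ![0,0,2], ![0,2,0]} : Set (Fin 3 → ZMod 4)) ≤ S4 := by
      rw [Submodule.span_le]
      rintro x hx
      simp only [Set.mem_insert_iff, Set.mem_singleton_iff] at hx
      rcases hx with rfl | rfl | rfl <;> exact ⟨by decide, by decide⟩
    exact this
  · intro x hx
    obtain ⟨h1, h2⟩ : codePred x := hx
    have g1 : (![1,1,1] : Fin 3 → ZMod 4) ∈ Submodule.span (ZMod 4)
        ({![1,1,1], ![0,0,2], ![0,2,0]} : Set (Fin 3 → ZMod 4)) :=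
      Submodule.subset_span (by simp)
    have g2 : (![0,0,2] : Fin 3 → ZMod 4) ∈ Submodule.span (ZMod 4)
        ({![1,1,1], ![0,0,2], ![0,2,0]} : Set (Fin 3 → ZMod 4)) :=
      Submodule.subset_span (by simp)
    have g3 : (![0,2,0] : Fin 3 → ZMod 4) ∈ Submodule.span (ZMod 4)
        ({![1,1,1], ![0,0,2], ![0,2,0]} : Set (Fin 3 → ZMod 4)) :=
      Submodule.subset_span (by simp)
    rcases two_mul_eq _ _ h1 with hb | hb <;> rcases two_mul_eq _ _ h2 with ha | ha
    · have hx' : x = x 0 • ![1,1,1] := by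
        funext i; fin_cases i <;> simp [hb, ha]
      rw [hx']; exact Submodule.smul_mem _ _ g1
    · have hx' : x = x 0 • ![1,1,1] + ![0,0,2] := by
        funext i; fin_cases i <;> simp [hb, ha]
      rw [hx']; exact Submodule.add_mem _ (Submodule.smul_mem _ _ g1) g2
    · have hx' : x = x 0 • ![1,1,1] + ![0,2,0] := by
        funext i; fin_cases i <;> simp [hb, ha]
      rw [hx']; exact Submodule.add_mem _ (Submodule.smul_mem _ _ g1) g3
    · have hx' : x = x 0 • ![1,1,1] + ![0,0,2] + ![0,2,0] := by
        funext i; fin_cases i <;> simp [hb, ha]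
      rw [hx']
      exact Submodule.add_mem _ (Submodule.add_mem _ (Submodule.smul_mem _ _ g1) g2) g3

set_option maxRecDepth 100000 in
theorem stmt_10 :
    let C := Submodule.span (ZMod 4)
      ({![1,1,1], ![0,0,2], ![0,2,0]} : Set (Fin 3 → ZMod 4))
    Set.ncard (C : Set (Fin 3 → ZMod 4)) = 16 ∧
    (∀ x ∈ C, (x + fun _ => 1) ∈ C) ∧
    (∀ c ∈ C, ∀ d ∈ C, c ≠ d → 2 ≤ asymDelta (liftWord c) (liftWord d)) := by
  intro C
  have hmem : ∀ x, x ∈ C ↔ codePred x := fun x =>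
    Set.ext_iff.mp span_eq_pred x
  refine ⟨?_, ?_, ?_⟩
  · have hset : (C : Set (Fin 3 → ZMod 4))
        = ↑(Finset.univ.filter codePred) := by
      rw [span_eq_pred]; ext x; simp
    rw [hset, Set.ncard_coe_finset]
    decide
  · intro x hx
    rw [hmem] at *
    revert hx; revert x; decide
  · intro c hc d hd hne
    rw [hmem] at hc hd
    revert hne hd hc; revert c d; decide
end

section
/- For q ≥ 6, the ℤ_q-linear code C_0 of length 3 generated by {(1,1,1),(0,1,3)} has asymmetric distance at least 2: for all distinct codewords x, y (with representatives in {0,...,q-1}^3), Δ(x,y) ≥ 2. -/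
set_option maxHeartbeats 1600000 in
theorem stmt_11 (q : ℕ) (hq : 6 ≤ q) :
    ∀ x ∈ Submodule.span (ZMod q) ({![1,1,1], ![0,1,3]} : Set (Fin 3 → ZMod q)),
    ∀ y ∈ Submodule.span (ZMod q) ({![1,1,1], ![0,1,3]} : Set (Fin 3 → ZMod q)),
      x ≠ y → 2 ≤ asymDelta (liftWord x) (liftWord y) := by
  have hq0 : NeZero q := ⟨by omega⟩
  intro x hx y hy hxy
  rw [Submodule.mem_span_pair] at hx hy
  obtain ⟨a, b, hab⟩ := hx
  obtain ⟨c, e, hce⟩ := hy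
  by_contra hcon
  push_neg at hcon
  -- abbreviate differences
  set d : Fin 3 → ℤ := fun i => liftWord y i - liftWord x i with hd
  have hcast : ∀ i, ((liftWord x i : ℤ) : ZMod q) = x i := by
    intro i
    simp [liftWord, ZMod.natCast_val, ZMod.intCast_cast]
  have hcast' : ∀ i, ((liftWord y i : ℤ) : ZMod q) = y i := by
    intro i
    simp [liftWord, ZMod.natCast_val, ZMod.intCast_cast]
  -- coordinates of x and y
  have hx0 : x 0 = a := by rw [← hab]; simp
  have hx1 : x 1 = a + b := by rw [← hab]; simp
  have hx2 : x 2 = a + 3 * b := by rw [← hab]; simp [mul_comm]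
  have hy0 : y 0 = c := by rw [← hce]; simp
  have hy1 : y 1 = c + e := by rw [← hce]; simp
  have hy2 : y 2 = c + 3 * e := by rw [← hce]; simp [mul_comm]
  -- the key congruence
  have hK : ((d 2 + 2 * d 0 - 3 * d 1 : ℤ) : ZMod q) = 0 := by
    push_cast
    simp only [hd]
    push_cast
    rw [hcast 0, hcast 1, hcast 2, hcast' 0, hcast' 1, hcast' 2,
      hx0, hx1, hx2, hy0, hy1, hy2]
    ring
  -- bounds from asymDelta < 2
  have hN1 : asymN (liftWord x) (liftWord y) ≤ 1 := by
    have := le_max_left (asymN (liftWord x) (liftWord y)) (asymN (liftWord y) (liftWord x))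
    have h2 := hcon
    unfold asymDelta at h2
    omega
  have hN2 : asymN (liftWord y) (liftWord x) ≤ 1 := by
    have := le_max_right (asymN (liftWord x) (liftWord y)) (asymN (liftWord y) (liftWord x))
    have h2 := hcon
    unfold asymDelta at h2
    omega
  have hS1 : max (d 0) 0 + max (d 1) 0 + max (d 2) 0 ≤ 1 := by
    have : asymN (liftWord x) (liftWord y) =
        max (d 0) 0 + max (d 1) 0 + max (d 2) 0 := by
      simp [asymN, Fin.sum_univ_three, hd]
    omega
  have hS2 : max (-d 0) 0 + max (-d 1) 0 + max (-d 2) 0 ≤ 1 := by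
    have : asymN (liftWord y) (liftWord x) =
        max (-d 0) 0 + max (-d 1) 0 + max (-d 2) 0 := by
      simp [asymN, Fin.sum_univ_three, hd]
    omega
  -- x ≠ y means d ≠ 0
  have hne : ¬ (d 0 = 0 ∧ d 1 = 0 ∧ d 2 = 0) := by
    rintro ⟨h0, h1, h2⟩
    simp only [hd] at h0 h1 h2
    apply hxy
    funext i
    have hv : liftWord x i = liftWord y i := by
      fin_cases i
      · show liftWord x 0 = liftWord y 0; omega
      · show liftWord x 1 = liftWord y 1; omega
      · show liftWord x 2 = liftWord y 2; omega
    simp only [liftWord, Int.natCast_inj] at hv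
    exact ZMod.val_injective q hv
  have hc0 := max_choice (d 0) 0
  have hc1 := max_choice (d 1) 0
  have hc2 := max_choice (d 2) 0
  have hm0 := max_choice (-d 0) 0
  have hm1 := max_choice (-d 1) 0
  have hm2 := max_choice (-d 2) 0
  -- conclude K is nonzero and small
  have hKne : d 2 + 2 * d 0 - 3 * d 1 ≠ 0 ∧
      d 2 + 2 * d 0 - 3 * d 1 ≤ 5 ∧ -5 ≤ d 2 + 2 * d 0 - 3 * d 1 := by
    clear hK hcast hcast' hx0 hx1 hx2 hy0 hy1 hy2 hab hce hN1 hN2 hcon hxy hq hq0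
    rcases hc0 with h|h <;> rcases hc1 with h1|h1 <;> rcases hc2 with h2|h2 <;>
      rcases hm0 with g|g <;> rcases hm1 with g1|g1 <;> rcases hm2 with g2|g2 <;>
      omega
  obtain ⟨hKne, hKle, hKge⟩ := hKne
  have hdvd : (q : ℤ) ∣ (d 2 + 2 * d 0 - 3 * d 1) :=
    (ZMod.intCast_zmod_eq_zero_iff_dvd _ q).mp hK
  have hdvd' : (q : ℤ) ∣ |d 2 + 2 * d 0 - 3 * d 1| := (dvd_abs _ _).mpr hdvd
  have hle := Int.le_of_dvd (abs_pos.mpr hKne) hdvd'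
  have habs : |d 2 + 2 * d 0 - 3 * d 1| ≤ 5 := abs_le.mpr ⟨hKge, hKle⟩
  omega
end

section
/- The ternary code C_{0'} of length 5 generated over ℤ_3 by {(0,0,0,1,1),(0,1,2,0,1),(1,1,1,1,1)} has 27 codewords, is self-complementary, and any two distinct codewords (with representatives in {0,1,2}^5 ⊂ ℤ^5) are at asymmetric distance Δ ≥ 2. -/
def Mgen : Matrix (Fin 5) (Fin 3) (ZMod 3) := !![0,0,1; 0,1,1; 0,2,1; 1,0,1; 1,1,1]

lemma range_eq : Set.range Mgen.transpose =
    ({![0,0,0,1,1], ![0,1,2,0,1], ![1,1,1,1,1]} : Set (Fin 5 → ZMod 3)) := by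
  have h : Mgen.transpose = ![![0,0,0,1,1], ![0,1,2,0,1], ![1,1,1,1,1]] := by
    ext i j; fin_cases i <;> fin_cases j <;> rfl
  rw [h]
  ext x
  simp only [Matrix.range_cons, Matrix.range_empty, Set.union_empty, Set.mem_insert_iff,
    Set.mem_singleton_iff, Set.mem_union]

lemma span_eq : Submodule.span (ZMod 3)
      ({![0,0,0,1,1], ![0,1,2,0,1], ![1,1,1,1,1]} : Set (Fin 5 → ZMod 3))
    = LinearMap.range Mgen.mulVecLin := by
  rw [Matrix.range_mulVecLin]
  exact (congrArg (Submodule.span (ZMod 3)) range_eq).symm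

lemma inj : Function.Injective Mgen.mulVec := by decide

lemma dist : ∀ a b : Fin 3 → ZMod 3, a ≠ b →
    2 ≤ asymDelta (liftWord (Mgen.mulVec a)) (liftWord (Mgen.mulVec b)) := by decide

theorem stmt_12 :
    let C := Submodule.span (ZMod 3)
      ({![0,0,0,1,1], ![0,1,2,0,1], ![1,1,1,1,1]} : Set (Fin 5 → ZMod 3))
    Set.ncard (C : Set (Fin 5 → ZMod 3)) = 27 ∧
    (∀ x ∈ C, (x + fun _ => 1) ∈ C) ∧
    (∀ c ∈ C, ∀ d ∈ C, c ≠ d → 2 ≤ asymDelta (liftWord c) (liftWord d)) := by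
  intro C
  have hC : C = LinearMap.range Mgen.mulVecLin := span_eq
  refine ⟨?_, ?_, ?_⟩
  · have hset : (C : Set (Fin 5 → ZMod 3)) = Set.range Mgen.mulVec := by
      rw [hC]; rfl
    rw [hset, ← Nat.card_coe_set_eq, Nat.card_range_of_injective inj]
    simp
  · intro x hx
    have h1 : (fun _ => (1 : ZMod 3)) ∈ C := by
      have : ![1,1,1,1,1] ∈ C := Submodule.subset_span (by simp)
      convert this using 1
      funext i; fin_cases i <;> rfl
    exact C.add_mem hx h1
  · intro c hc d hd hne
    rw [hC, LinearMap.mem_range] at hc hd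
    obtain ⟨a, ha⟩ := hc
    obtain ⟨b, hb⟩ := hd
    have hab : a ≠ b := fun h => hne (ha ▸ hb ▸ h ▸ rfl)
    rw [← ha, ← hb]
    exact dist a b hab
end

section
/- The code C_{0'} over ℤ_5 of length 5 generated by {(0,0,0,1,1),(0,0,1,0,2),(1,1,1,1,1)} has 125 codewords, is self-complementary, and any two distinct codewords (lifted to {0,...,4}^5) have asymmetric distance Δ ≥ 2. -/
def wrd (a b c : ZMod 5) : Fin 5 → ZMod 5 := ![a, a, b, c, c + 2*(b - a)]

def Nf (x0 x1 x2 x3 x4 y0 y1 y2 y3 y4 : ℤ) : ℤ :=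
  max (y0-x0) 0 + max (y1-x1) 0 + max (y2-x2) 0 + max (y3-x3) 0 + max (y4-x4) 0

def Lf (a b c : ZMod 5) : ℤ := (((c.val + 2*b.val + 3*a.val) % 5 : ℕ) : ℤ)

def Df (a b c a' b' c' : ZMod 5) : ℤ :=
  max (Nf a.val a.val b.val c.val (Lf a b c) a'.val a'.val b'.val c'.val (Lf a' b' c'))
      (Nf a'.val a'.val b'.val c'.val (Lf a' b' c') a.val a.val b.val c.val (Lf a b c))

lemma asymN_eq (x y : Fin 5 → ℤ) :
    asymN x y = Nf (x 0) (x 1) (x 2) (x 3) (x 4) (y 0) (y 1) (y 2) (y 3) (y 4) := by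
  simp [asymN, Nf, Fin.sum_univ_five]

lemma lift_wrd (a b c : ZMod 5) :
    liftWord (wrd a b c) = ![(a.val : ℤ), a.val, b.val, c.val, Lf a b c] := by
  have h5 : c + 2*(b - a) = ((c.val + 2*b.val + 3*a.val : ℕ) : ZMod 5) := by
    push_cast [ZMod.natCast_val, ZMod.cast_id]
    ring_nf
    rw [show (3 : ZMod 5) = -2 by decide]
    ring
  funext i
  fin_cases i
  · simp [liftWord, wrd]
  · simp [liftWord, wrd]
  · simp [liftWord, wrd]
  · simp [liftWord, wrd]
  · show ((wrd a b c 4).val : ℤ) = _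
    rw [show wrd a b c 4 = c + 2*(b-a) from rfl, h5, ZMod.val_natCast]
    simp [Lf]

lemma delta_eq (a b c a' b' c' : ZMod 5) :
    asymDelta (liftWord (wrd a b c)) (liftWord (wrd a' b' c')) = Df a b c a' b' c' := by
  rw [asymDelta, asymN_eq, asymN_eq, lift_wrd, lift_wrd, Df]
  simp

set_option maxHeartbeats 4000000 in
lemma key : ∀ a b c a' b' c' : ZMod 5, (a,b,c) ≠ (a',b',c') → 2 ≤ Df a b c a' b' c' := by
  decide

def phi : (Fin 5 → ZMod 5) →ₗ[ZMod 5] (ZMod 5) × (ZMod 5) where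
  toFun x := (x 1 - x 0, x 4 - x 3 - 2*(x 2 - x 0))
  map_add' x y := by simp [Prod.ext_iff]; constructor <;> ring
  map_smul' r x := by simp [Prod.ext_iff]; constructor <;> ring

lemma mem_C (x : Fin 5 → ZMod 5) :
    x ∈ Submodule.span (ZMod 5)
      ({![0,0,0,1,1], ![0,0,1,0,2], ![1,1,1,1,1]} : Set (Fin 5 → ZMod 5)) ↔
    ∃ a b c, x = wrd a b c := by
  constructor
  · intro hx
    have hker : x ∈ LinearMap.ker phi := by
      refine Submodule.span_le.2 ?_ hx
      rintro v (rfl | rfl | rfl) <;> simp [LinearMap.mem_ker, phi, Prod.ext_iff]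
    simp only [LinearMap.mem_ker, phi, LinearMap.coe_mk, AddHom.coe_mk, Prod.mk_eq_zero] at hker
    obtain ⟨h1, h2⟩ := hker
    refine ⟨x 0, x 2, x 3, ?_⟩
    funext i
    fin_cases i <;> simp [wrd]
    · linear_combination h1
    · linear_combination h2
  · rintro ⟨a, b, c, rfl⟩
    have : wrd a b c = (c - a) • ![0,0,0,1,1] + (b - a) • ![0,0,1,0,2] + a • ![1,1,1,1,1] := by
      funext i; fin_cases i <;> simp [wrd] <;> ring
    rw [this]
    refine Submodule.add_mem _ (Submodule.add_mem _ ?_ ?_) ?_ <;>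
      exact Submodule.smul_mem _ _ (Submodule.subset_span (by simp))

lemma wrd_inj : Function.Injective (fun t : ZMod 5 × ZMod 5 × ZMod 5 => wrd t.1 t.2.1 t.2.2) := by
  rintro ⟨a, b, c⟩ ⟨a', b', c'⟩ h
  have h0 := congr_fun h 0
  have h2 := congr_fun h 2
  have h3 := congr_fun h 3
  simp [wrd] at h0 h2 h3
  simp [h0, h2, h3]

theorem stmt_13 :
    let C := Submodule.span (ZMod 5)
      ({![0,0,0,1,1], ![0,0,1,0,2], ![1,1,1,1,1]} : Set (Fin 5 → ZMod 5))
    Set.ncard (C : Set (Fin 5 → ZMod 5)) = 125 ∧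
    (∀ x ∈ C, (x + fun _ => 1) ∈ C) ∧
    (∀ c ∈ C, ∀ d ∈ C, c ≠ d → 2 ≤ asymDelta (liftWord c) (liftWord d)) := by
  intro C
  have hmem : ∀ y, y ∈ C ↔ ∃ a b c, y = wrd a b c := fun y => mem_C y
  refine ⟨?_, ?_, ?_⟩
  · have hset : (C : Set (Fin 5 → ZMod 5)) =
        Set.range (fun t : ZMod 5 × ZMod 5 × ZMod 5 => wrd t.1 t.2.1 t.2.2) := by
      ext x
      rw [SetLike.mem_coe, hmem]
      constructor
      · rintro ⟨a, b, c, rfl⟩; exact ⟨(a, b, c), rfl⟩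
      · rintro ⟨⟨a, b, c⟩, rfl⟩; exact ⟨a, b, c, rfl⟩
    rw [hset, ← Nat.card_coe_set_eq, Nat.card_range_of_injective wrd_inj]
    simp [Nat.card_eq_fintype_card]
  · intro x hx
    rw [hmem] at hx ⊢
    obtain ⟨a, b, c, rfl⟩ := hx
    refine ⟨a + 1, b + 1, c + 1, ?_⟩
    funext i
    fin_cases i <;> simp [wrd] <;> ring
  · intro c hc d hd hne
    rw [hmem] at hc hd
    obtain ⟨a, b, c0, rfl⟩ := hc
    obtain ⟨a', b', c0', rfl⟩ := hd
    rw [delta_eq]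
    apply key
    intro h
    apply hne
    simp only [Prod.mk.injEq] at h
    rw [h.1, h.2.1, h.2.2]
end
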